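/- arXiv:1707.01365 — 3 statements merged into one kernel-verified Lean document; each statement's English description precedes it below -/
import Mathlib

section
/- Let P be a Markov kernel on a measurable space satisfying a Doeblin minorization P(x, A) ≥ ν·μ(A) for all x and measurable A, where μ is a probability measure and 0 < ν ≤ 1. Then for all probability measures μ₁, μ₂: ‖μ₁P − μ₂P‖_tv ≤ (1−ν)·‖μ₁−μ₂‖_tv. -/
open MeasureTheory ProbabilityTheory

/-- Total variation distance between two measures. -/
noncomputable def tvDist {Z : Type*} [MeasurableSpace Z] (μ ν : Measure Z) : ℝ :=
  ⨆ s : {s : Set Z // MeasurableSet s}, |(μ s.1).toReal - (ν s.1).toReal|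

lemma tv_bddAbove {Z : Type*} [MeasurableSpace Z] (μ₁ μ₂ : Measure Z)
    [IsProbabilityMeasure μ₁] [IsProbabilityMeasure μ₂] :
    BddAbove (Set.range fun s : {s : Set Z // MeasurableSet s} =>
      |(μ₁ s.1).toReal - (μ₂ s.1).toReal|) := by
  refine ⟨2, ?_⟩
  rintro x ⟨s, rfl⟩
  have h1 : (μ₁ s.1).toReal ≤ 1 := by
    simpa using ENNReal.toReal_mono ENNReal.one_ne_top prob_le_one
  have h2 : (μ₂ s.1).toReal ≤ 1 := by
    simpa using ENNReal.toReal_mono ENNReal.one_ne_top prob_le_one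
  have := abs_sub_abs_le_abs_sub (μ₁ s.1).toReal (μ₂ s.1).toReal
  have h1' : (0:ℝ) ≤ (μ₁ s.1).toReal := ENNReal.toReal_nonneg
  have h2' : (0:ℝ) ≤ (μ₂ s.1).toReal := ENNReal.toReal_nonneg
  calc |(μ₁ s.1).toReal - (μ₂ s.1).toReal| ≤ |(μ₁ s.1).toReal| + |(μ₂ s.1).toReal| :=
        abs_sub _ _
    _ ≤ 1 + 1 := by
        rw [abs_of_nonneg h1', abs_of_nonneg h2']; exact add_le_add h1 h2
    _ = 2 := by norm_num

lemma tvDist_comm {Z : Type*} [MeasurableSpace Z] (μ₁ μ₂ : Measure Z) :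
    tvDist μ₁ μ₂ = tvDist μ₂ μ₁ := by
  unfold tvDist
  exact iSup_congr fun s => abs_sub_comm _ _

lemma key_lemma {Z : Type*} [MeasurableSpace Z] (μ₁ μ₂ : Measure Z)
    [IsProbabilityMeasure μ₁] [IsProbabilityMeasure μ₂]
    (g : Z → ENNReal) (hg : Measurable g) (c : ENNReal) (hc : c ≤ 1)
    (hgc : ∀ x, g x ≤ c) :
    (∫⁻ x, g x ∂μ₁).toReal - (∫⁻ x, g x ∂μ₂).toReal ≤ c.toReal * tvDist μ₁ μ₂ := by
  obtain ⟨S, hS, hpos, hneg⟩ := hahn_decomposition (μ := μ₁) (ν := μ₂)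
  set h : Z → ENNReal := fun x => c - g x with hh
  have hhm : Measurable h := measurable_const.sub hg
  have hgh : ∀ x, g x + h x = c := fun x => add_tsub_cancel_of_le (hgc x)
  have hcne : c ≠ ⊤ := (lt_of_le_of_lt hc ENNReal.one_lt_top).ne
  -- restricted measure comparisons
  have hres1 : μ₁.restrict Sᶜ ≤ μ₂.restrict Sᶜ := by
    refine Measure.le_iff.2 fun t ht => ?_
    rw [Measure.restrict_apply ht, Measure.restrict_apply ht]
    exact hneg _ (ht.inter hS.compl) Set.inter_subset_right
  have hres2 : μ₂.restrict S ≤ μ₁.restrict S := by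
    refine Measure.le_iff.2 fun t ht => ?_
    rw [Measure.restrict_apply ht, Measure.restrict_apply ht]
    exact hpos _ (ht.inter hS) Set.inter_subset_right
  have hconst : ∀ (ρ : Measure Z), c * ρ S = ∫⁻ x in S, g x ∂ρ + ∫⁻ x in S, h x ∂ρ := by
    intro ρ
    rw [← lintegral_add_left hg]
    calc c * ρ S = ∫⁻ _ in S, c ∂ρ := by rw [setLIntegral_const, mul_comm]
      _ = ∫⁻ x in S, (g x + h x) ∂ρ := lintegral_congr fun x => (hgh x).symm
  -- main ENNReal inequality
  have main : ∫⁻ x, g x ∂μ₁ + c * μ₂ S ≤ ∫⁻ x, g x ∂μ₂ + c * μ₁ S := by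
    rw [← lintegral_add_compl g hS (μ := μ₁), ← lintegral_add_compl g hS (μ := μ₂),
      hconst μ₁, hconst μ₂]
    have e1 : ∫⁻ x in Sᶜ, g x ∂μ₁ ≤ ∫⁻ x in Sᶜ, g x ∂μ₂ := lintegral_mono' hres1 le_rfl
    have e2 : ∫⁻ x in S, h x ∂μ₂ ≤ ∫⁻ x in S, h x ∂μ₁ := lintegral_mono' hres2 le_rfl
    calc ∫⁻ x in S, g x ∂μ₁ + ∫⁻ x in Sᶜ, g x ∂μ₁ + (∫⁻ x in S, g x ∂μ₂ + ∫⁻ x in S, h x ∂μ₂)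
        ≤ ∫⁻ x in S, g x ∂μ₁ + ∫⁻ x in Sᶜ, g x ∂μ₂ + (∫⁻ x in S, g x ∂μ₂ + ∫⁻ x in S, h x ∂μ₁) := by
          gcongr
      _ = ∫⁻ x in S, g x ∂μ₂ + ∫⁻ x in Sᶜ, g x ∂μ₂ + (∫⁻ x in S, g x ∂μ₁ + ∫⁻ x in S, h x ∂μ₁) := by
          ring
  -- finiteness
  have hfin : ∀ (ρ : Measure Z) [IsProbabilityMeasure ρ], ∫⁻ x, g x ∂ρ ≠ ⊤ := by
    intro ρ _
    have : ∫⁻ x, g x ∂ρ ≤ c := by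
      calc ∫⁻ x, g x ∂ρ ≤ ∫⁻ _, c ∂ρ := lintegral_mono hgc
        _ = c := by simp
    exact (lt_of_le_of_lt this hcne.lt_top).ne
  have hμS : ∀ (ρ : Measure Z) [IsProbabilityMeasure ρ], c * ρ S ≠ ⊤ :=
    fun ρ _ => ENNReal.mul_ne_top hcne (measure_ne_top ρ S)
  -- to reals
  have mainR : (∫⁻ x, g x ∂μ₁).toReal + c.toReal * (μ₂ S).toReal ≤
      (∫⁻ x, g x ∂μ₂).toReal + c.toReal * (μ₁ S).toReal := by
    have := ENNReal.toReal_mono (by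
        exact ENNReal.add_ne_top.2 ⟨hfin μ₂, hμS μ₁⟩) main
    rwa [ENNReal.toReal_add (hfin μ₁) (hμS μ₂), ENNReal.toReal_add (hfin μ₂) (hμS μ₁),
      ENNReal.toReal_mul, ENNReal.toReal_mul] at this
  have hstep : (∫⁻ x, g x ∂μ₁).toReal - (∫⁻ x, g x ∂μ₂).toReal ≤
      c.toReal * ((μ₁ S).toReal - (μ₂ S).toReal) := by
    nlinarith [mainR]
  refine hstep.trans ?_
  have habs : (μ₁ S).toReal - (μ₂ S).toReal ≤ tvDist μ₁ μ₂ := by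
    refine le_trans (le_abs_self _) ?_
    exact le_ciSup (tv_bddAbove μ₁ μ₂) (⟨S, hS⟩ : {s : Set Z // MeasurableSet s})
  exact mul_le_mul_of_nonneg_left habs ENNReal.toReal_nonneg

theorem doeblin_contraction {Z : Type*} [MeasurableSpace Z]
    (P : Kernel Z Z) [IsMarkovKernel P]
    (μ : Measure Z) [IsProbabilityMeasure μ]
    (ν : ℝ) (hν0 : 0 < ν) (hν1 : ν ≤ 1)
    (hmin : ∀ x : Z, ∀ A : Set Z, MeasurableSet A →
      ENNReal.ofReal ν * μ A ≤ P x A)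
    (μ₁ μ₂ : Measure Z) [IsProbabilityMeasure μ₁] [IsProbabilityMeasure μ₂] :
    tvDist (μ₁.bind P) (μ₂.bind P) ≤ (1 - ν) * tvDist μ₁ μ₂ := by
  set ν' : ENNReal := ENNReal.ofReal ν with hν'
  have hν'le : ν' ≤ 1 := by
    rw [hν']; exact ENNReal.ofReal_le_one.2 hν1
  set c : ENNReal := 1 - ν' with hcdef
  have hc1 : c ≤ 1 := tsub_le_self
  have hctoReal : c.toReal = 1 - ν := by
    rw [hcdef, ENNReal.toReal_sub_of_le hν'le ENNReal.one_ne_top, ENNReal.toReal_one,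
      ENNReal.toReal_ofReal hν0.le]
  -- core: for each measurable A, given prob measures ρ₁ ρ₂, the difference bound
  have core : ∀ (ρ₁ ρ₂ : Measure Z) [IsProbabilityMeasure ρ₁] [IsProbabilityMeasure ρ₂],
      ∀ A : Set Z, MeasurableSet A →
      ((ρ₁.bind P) A).toReal - ((ρ₂.bind P) A).toReal ≤ (1 - ν) * tvDist ρ₁ ρ₂ := by
    intro ρ₁ ρ₂ _ _ A hA
    set g : Z → ENNReal := fun x => P x A - ν' * μ A with hg
    have hgm : Measurable g := (P.measurable_coe hA).sub measurable_const
    have hgc : ∀ x, g x ≤ c := by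
      intro x
      rw [hg]
      refine tsub_le_iff_right.2 ?_
      have h1 : P x A + ν' * μ Aᶜ ≤ 1 := by
        calc P x A + ν' * μ Aᶜ ≤ P x A + P x Aᶜ :=
              add_le_add_right (hmin x Aᶜ hA.compl) _
          _ = 1 := by rw [measure_add_measure_compl hA]; simp
      have h2 : P x A ≤ 1 - ν' * μ Aᶜ := ENNReal.le_sub_of_add_le_right
        (ENNReal.mul_ne_top (lt_of_le_of_lt hν'le ENNReal.one_lt_top).ne (measure_ne_top μ Aᶜ)) h1
      refine h2.trans ?_
      refine tsub_le_iff_right.2 ?_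
      have : (1 : ENNReal) ≤ 1 - ν' + ν' := by
        rw [tsub_add_cancel_of_le hν'le]
      calc (1 : ENNReal) ≤ 1 - ν' + ν' := this
        _ = 1 - ν' + ν' * (μ A + μ Aᶜ) := by
            rw [measure_add_measure_compl hA, measure_univ, mul_one]
        _ = 1 - ν' + ν' * μ A + ν' * μ Aᶜ := by ring
    have hbind : ∀ (ρ : Measure Z) [IsProbabilityMeasure ρ],
        (ρ.bind P) A = ∫⁻ x, g x ∂ρ + ν' * μ A := by
      intro ρ _
      rw [Measure.bind_apply hA P.measurable.aemeasurable]
      calc ∫⁻ x, P x A ∂ρ = ∫⁻ x, (g x + ν' * μ A) ∂ρ :=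
            lintegral_congr fun x => (tsub_add_cancel_of_le (hmin x A hA)).symm
        _ = ∫⁻ x, g x ∂ρ + ν' * μ A := by
            rw [lintegral_add_right _ measurable_const, lintegral_const, measure_univ, mul_one]
    have hfin : ν' * μ A ≠ ⊤ := ENNReal.mul_ne_top (lt_of_le_of_lt hν'le ENNReal.one_lt_top).ne
      (measure_ne_top μ A)
    have hcne : c ≠ ⊤ := (lt_of_le_of_lt hc1 ENNReal.one_lt_top).ne
    have hgfin : ∀ (ρ : Measure Z) [IsProbabilityMeasure ρ], ∫⁻ x, g x ∂ρ ≠ ⊤ := by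
      intro ρ _
      have : ∫⁻ x, g x ∂ρ ≤ c := by
        calc ∫⁻ x, g x ∂ρ ≤ ∫⁻ _, c ∂ρ := lintegral_mono hgc
          _ = c := by simp
      exact (lt_of_le_of_lt this hcne.lt_top).ne
    have heq : ((ρ₁.bind P) A).toReal - ((ρ₂.bind P) A).toReal =
        (∫⁻ x, g x ∂ρ₁).toReal - (∫⁻ x, g x ∂ρ₂).toReal := by
      rw [hbind ρ₁, hbind ρ₂, ENNReal.toReal_add (hgfin ρ₁) hfin,
        ENNReal.toReal_add (hgfin ρ₂) hfin]
      ring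
    rw [heq, ← hctoReal]
    exact key_lemma ρ₁ ρ₂ g hgm c hc1 hgc
  -- conclude
  have goal : ∀ s : {s : Set Z // MeasurableSet s},
      |((μ₁.bind P) s.1).toReal - ((μ₂.bind P) s.1).toReal| ≤ (1 - ν) * tvDist μ₁ μ₂ := by
    rintro ⟨A, hA⟩
    rw [abs_le]
    constructor
    · have := core μ₂ μ₁ A hA
      rw [tvDist_comm μ₂ μ₁] at this
      simp only [Subtype.coe_mk]
      linarith
    · exact core μ₁ μ₂ A hA
  exact ciSup_le goal
end

section
/- In the hidden-variable model where V₁,…,V_{n+1} are i.i.d. with law π_V and X₁,…,X_n satisfy P(X_i = x | V) = K_i(x,V_i,V_{i+1}) with ν_i ≤ K_i ≤ 1, for any q ≥ 1 and q ≤ k < n, the backward conditional kernel P(V_k ∈ · | V_{k+1}, X_{q:n}) satisfies a Doeblin minorization: there exists a probability measure μ_{k,q} (depending on X_{q:k-1}) such that P(V_k ∈ A | V_{k+1}, X_{q:n}) ≥ ν_k · μ_{k,q}(A) for all measurable A. -/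
open MeasureTheory

/-- `alphaAux π K x m k v` : conditional probability of observing `x (k-m), …, x (k-1)`
given that the latent variable with index `k` equals `v`, in the model where the
latent variables are i.i.d. with law `π` and `P(X_i = y | V) = K i y V_i V_{i+1}`. -/
noncomputable def alphaAux {V 𝕏 : Type*} [MeasurableSpace V] (π : Measure V)
    (K : ℕ → 𝕏 → V → V → ℝ) (x : ℕ → 𝕏) : ℕ → ℕ → V → ℝ
  | 0, _, _ => 1
  | m + 1, k, v => ∫ u, K (k - 1) (x (k - 1)) u v * alphaAux π K x m (k - 1) u ∂π

/-- The backward kernel `P(V_k ∈ A | V_{k+1} = w, X_{q:n} = x_{q:n})`.  (By conditional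
independence it only depends on `x_{q:k}`.) -/
noncomputable def backKer {V 𝕏 : Type*} [MeasurableSpace V] (π : Measure V)
    (K : ℕ → 𝕏 → V → V → ℝ) (x : ℕ → 𝕏) (q k : ℕ) (w : V) (A : Set V) : ℝ :=
  (∫ v, A.indicator (fun _ => (1 : ℝ)) v * (K k (x k) v w * alphaAux π K x (k - q) k v) ∂π) /
    (∫ v, K k (x k) v w * alphaAux π K x (k - q) k v ∂π)

/-- The minorizing measure `μ_{k,q}(A)`. -/
noncomputable def minorMeas {V 𝕏 : Type*} [MeasurableSpace V] (π : Measure V)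
    (K : ℕ → 𝕏 → V → V → ℝ) (x : ℕ → 𝕏) (q k : ℕ) (A : Set V) : ℝ :=
  (∫ v, A.indicator (fun _ => (1 : ℝ)) v * alphaAux π K x (k - q) k v ∂π) /
    (∫ v, alphaAux π K x (k - q) k v ∂π)


private lemma alpha_prop {V 𝕏 : Type*} [MeasurableSpace V] (π : Measure V)
    [IsProbabilityMeasure π]
    (K : ℕ → 𝕏 → V → V → ℝ) (ν : ℕ → ℝ)
    (hKmeas : ∀ i (y : 𝕏), Measurable fun p : V × V => K i y p.1 p.2)
    (hν : ∀ i, 0 < ν i)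
    (hKlb : ∀ i (y : 𝕏) (v w : V), ν i ≤ K i y v w)
    (hKub : ∀ i (y : 𝕏) (v w : V), K i y v w ≤ 1)
    (x : ℕ → 𝕏) :
    ∀ m k, Measurable (alphaAux π K x m k) ∧
      ∃ c, 0 < c ∧ ∀ v, c ≤ alphaAux π K x m k v ∧ alphaAux π K x m k v ≤ 1 := by
  intro m
  induction m with
  | zero =>
    intro k
    refine ⟨measurable_const, 1, one_pos, fun v => ⟨le_refl 1, le_refl 1⟩⟩
  | succ m ih =>
    intro k
    obtain ⟨hmeas, c, hc, hbd⟩ := ih (k - 1)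
    have hKm : Measurable fun p : V × V =>
        K (k - 1) (x (k - 1)) p.2 p.1 * alphaAux π K x m (k - 1) p.2 :=
      ((hKmeas _ _).comp measurable_swap).mul (hmeas.comp measurable_snd)
    have hmeas' : Measurable (alphaAux π K x (m + 1) k) := by
      have := (hKm.stronglyMeasurable.integral_prod_right' (ν := π)).measurable
      simpa [alphaAux] using this
    have hint : ∀ v, Integrable
        (fun u => K (k - 1) (x (k - 1)) u v * alphaAux π K x m (k - 1) u) π := by
      intro v
      refine (integrable_const (1 : ℝ)).mono'
        (((hKmeas _ _).comp (measurable_id.prodMk measurable_const)).mul hmeas).aestronglyMeasurable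
        (ae_of_all _ fun u => ?_)
      have h1 := (hbd u).1
      have h2 := (hbd u).2
      have h3 := hKlb (k - 1) (x (k - 1)) u v
      have h4 := hKub (k - 1) (x (k - 1)) u v
      have h5 := (hν (k - 1)).le
      rw [Real.norm_eq_abs, abs_of_nonneg (by nlinarith)]
      nlinarith
    refine ⟨hmeas', ν (k - 1) * c, mul_pos (hν _) hc, fun v => ?_⟩
    constructor
    · have : (ν (k - 1) * c) = ∫ _, (ν (k - 1) * c) ∂π := by
        simp
      rw [this]
      show _ ≤ alphaAux π K x (m + 1) k v
      rw [show alphaAux π K x (m + 1) k v = ∫ u,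
          K (k - 1) (x (k - 1)) u v * alphaAux π K x m (k - 1) u ∂π from rfl]
      refine integral_mono (integrable_const _) (hint v) fun u => ?_
      have h1 := (hbd u).1
      have h3 := hKlb (k - 1) (x (k - 1)) u v
      have h5 := (hν (k - 1)).le
      nlinarith
    · rw [show alphaAux π K x (m + 1) k v = ∫ u,
          K (k - 1) (x (k - 1)) u v * alphaAux π K x m (k - 1) u ∂π from rfl]
      have : (1 : ℝ) = ∫ _, (1 : ℝ) ∂π := by simp
      rw [this]
      refine integral_mono (hint v) (integrable_const _) fun u => ?_
      have h1 := (hbd u).1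
      have h2 := (hbd u).2
      have h4 := hKub (k - 1) (x (k - 1)) u v
      have h3 := hKlb (k - 1) (x (k - 1)) u v
      have h5 := (hν (k - 1)).le
      nlinarith

theorem backward_doeblin {V 𝕏 : Type*} [MeasurableSpace V] [Countable 𝕏]
    (π : Measure V) [IsProbabilityMeasure π]
    (K : ℕ → 𝕏 → V → V → ℝ) (ν : ℕ → ℝ)
    (hKmeas : ∀ i (y : 𝕏), Measurable fun p : V × V => K i y p.1 p.2)
    (hKsum : ∀ i (v w : V), HasSum (fun y : 𝕏 => K i y v w) 1)
    (hν : ∀ i, 0 < ν i)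
    (hKlb : ∀ i (y : 𝕏) (v w : V), ν i ≤ K i y v w)
    (hKub : ∀ i (y : 𝕏) (v w : V), K i y v w ≤ 1)
    (x : ℕ → 𝕏) (q k n : ℕ) (hq : 1 ≤ q) (hqk : q ≤ k) (hkn : k < n) :
    ∀ w : V, ∀ A : Set V, MeasurableSet A →
      ν k * minorMeas π K x q k A ≤ backKer π K x q k w A := by
  intro w A hA
  obtain ⟨hαm, c, hc, hbd⟩ :=
    alpha_prop π K ν hKmeas hν hKlb hKub x (k - q) k
  set α : V → ℝ := alphaAux π K x (k - q) k with hα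
  set f : V → ℝ := fun v => K k (x k) v w * α v with hf
  have hfm : Measurable f :=
    ((hKmeas k (x k)).comp (measurable_id.prodMk measurable_const)).mul hαm
  have hbdf : ∀ v, ν k * c ≤ f v ∧ f v ≤ 1 := by
    intro v
    have h1 := (hbd v).1; have h2 := (hbd v).2
    have h3 := hKlb k (x k) v w; have h4 := hKub k (x k) v w
    have h5 := (hν k).le
    simp only [hf]
    constructor
    · nlinarith
    · nlinarith
  have hαnn : ∀ v, 0 ≤ α v := fun v => le_trans hc.le (hbd v).1
  have hfnn : ∀ v, 0 ≤ f v := fun v =>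
    le_trans (mul_pos (hν k) hc).le (hbdf v).1
  have bdd_int : ∀ g : V → ℝ, Measurable g → (∀ v, 0 ≤ g v) → (∀ v, g v ≤ 1) →
      Integrable g π := by
    intro g hg h0 h1
    refine (integrable_const (1 : ℝ)).mono' hg.aestronglyMeasurable
      (ae_of_all _ fun v => ?_)
    rw [Real.norm_eq_abs, abs_of_nonneg (h0 v)]; exact h1 v
  have hαint : Integrable α π := bdd_int α hαm hαnn fun v => (hbd v).2
  have hfint : Integrable f π := bdd_int f hfm hfnn fun v => (hbdf v).2
  have hindnn : ∀ v, 0 ≤ A.indicator (fun _ => (1 : ℝ)) v := fun v => by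
    classical rw [Set.indicator_apply]; split <;> norm_num
  have hindle : ∀ v, A.indicator (fun _ => (1 : ℝ)) v ≤ 1 := fun v => by
    classical rw [Set.indicator_apply]; split <;> norm_num
  have hindm : Measurable (A.indicator (fun _ => (1 : ℝ))) :=
    measurable_const.indicator hA
  have hIAα : Integrable (fun v => A.indicator (fun _ => (1 : ℝ)) v * α v) π :=
    bdd_int _ (hindm.mul hαm)
      (fun v => mul_nonneg (hindnn v) (hαnn v))
      (fun v => by nlinarith [hindnn v, hindle v, hαnn v, (hbd v).2])
  have hIAf : Integrable (fun v => A.indicator (fun _ => (1 : ℝ)) v * f v) π :=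
    bdd_int _ (hindm.mul hfm)
      (fun v => mul_nonneg (hindnn v) (hfnn v))
      (fun v => by nlinarith [hindnn v, hindle v, hfnn v, (hbdf v).2])
  have hDpos : 0 < ∫ v, α v ∂π := by
    have : (c : ℝ) = ∫ _, c ∂π := by simp
    calc (0:ℝ) < c := hc
    _ = ∫ _, c ∂π := this
    _ ≤ ∫ v, α v ∂π := integral_mono (integrable_const _) hαint fun v => (hbd v).1
  have hD'pos : 0 < ∫ v, f v ∂π := by
    have : (ν k * c : ℝ) = ∫ _, ν k * c ∂π := by simp
    calc (0:ℝ) < ν k * c := mul_pos (hν k) hc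
    _ = ∫ _, ν k * c ∂π := this
    _ ≤ ∫ v, f v ∂π := integral_mono (integrable_const _) hfint fun v => (hbdf v).1
  have hDD' : ∫ v, f v ∂π ≤ ∫ v, α v ∂π :=
    integral_mono hfint hαint fun v => by
      have u1 := hKub k (x k) v w; have u2 := hαnn v
      simp only [hf]; nlinarith
  have hN'nn : 0 ≤ ∫ v, A.indicator (fun _ => (1 : ℝ)) v * f v ∂π :=
    integral_nonneg fun v => mul_nonneg (hindnn v) (hfnn v)
  have hnum : ν k * ∫ v, A.indicator (fun _ => (1 : ℝ)) v * α v ∂π ≤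
      ∫ v, A.indicator (fun _ => (1 : ℝ)) v * f v ∂π := by
    rw [← integral_const_mul]
    refine integral_mono (hIAα.const_mul _) hIAf fun v => ?_
    have h3 := hKlb k (x k) v w
    have hi := hindnn v; have ha := hαnn v
    simp only [hf]
    nlinarith [mul_le_mul_of_nonneg_right h3 (mul_nonneg hi ha)]
  rw [minorMeas, backKer, mul_div_assoc']
  exact div_le_div₀ hN'nn hnum hD'pos hDD'
end

section
/- In the round-robin graph E^{n,N}_RR with 2 ≤ n < N/4 and N even, let V_q denote the set of nodes at graph distance q from node 1. Then |V_0| = 1, |V_1| = n, and |V_q| = 2(n−1) for all 2 ≤ q ≤ Q, where Q is the quotient of (N/2 − 1) by (n−1). Moreover V_1 = {2x : x = 1,…,n} and for 2 ≤ q ≤ Q, V_q = {2x+1 : (q−2)(n−1)+1 ≤ x ≤ (q−1)(n−1)} ∪ {2x : 2+(q−1)(n−1) ≤ x ≤ 1+q(n−1)}. -/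
/-- `rrCycle N j` : the node sitting at cyclic position `j` in the initial
round-robin arrangement of the `N` nodes (`N` even).  Position `0` holds the fixed
node `1`; the cycle runs along the top row `1, 3, …, N-1` and then back along the
bottom row `N, N-2, …, 2`. -/
def rrCycle (N j : ℕ) : ℕ := if j ≤ N / 2 - 1 then 2 * j + 1 else 2 * (N - j)

/-- `rrNodeAt N t j` : the node sitting at cyclic position `j` during round `t ≥ 1`
of the round-robin scheduling: node `1` stays at position `0` and all other nodes
rotate one step at each round. -/
def rrNodeAt (N t j : ℕ) : ℕ :=
  if j = 0 then 1
  else rrCycle N (1 + (j - 1 + ((N - 1) - (t - 1) % (N - 1))) % (N - 1))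

/-- The pairing relation produced by the first `n` rounds of the round-robin
scheduling: at each round, the node at position `j` plays the node at the facing
position `N - 1 - j`. -/
def rrRel (n N a b : ℕ) : Prop :=
  ∃ t ∈ Finset.Icc 1 n, ∃ j ∈ Finset.range (N / 2),
    a = rrNodeAt N t j ∧ b = rrNodeAt N t (N - 1 - j)

/-- The round-robin graph `E^{n,N}_RR` on the nodes `1, …, N`. -/
def rrGraph (n N : ℕ) : SimpleGraph ℕ := SimpleGraph.fromRel (rrRel n N)

namespace RRaux

/-- level function: conjectured distance from node 1 (uncapped). -/
def lv (n v : ℕ) : ℕ :=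
  if v = 1 then 0
  else if v % 2 = 0 then (v / 2 - 2) / (n - 1) + 1 else (v / 2 - 1) / (n - 1) + 2

lemma lv_one (n : ℕ) : lv n 1 = 0 := by simp [lv]

lemma lv_even (n x : ℕ) : lv n (2 * x) = (x - 2) / (n - 1) + 1 := by
  unfold lv
  rw [if_neg (by omega), if_pos (by omega), Nat.mul_div_cancel_left x (by norm_num)]

lemma lv_odd (n x : ℕ) (hx : 1 ≤ x) : lv n (2 * x + 1) = (x - 1) / (n - 1) + 2 := by
  unfold lv
  rw [if_neg (by omega), if_neg (by omega), show (2 * x + 1) / 2 = x by omega]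

section Main

variable {n N M : ℕ}

lemma cycle_lo (hN : N = 2 * M) {k : ℕ} (hk1 : 1 ≤ k) (hk2 : k ≤ M - 1) :
    rrCycle N k = 2 * k + 1 := by
  unfold rrCycle; rw [if_pos (by omega)]

lemma cycle_hi (hN : N = 2 * M) {x : ℕ} (hx1 : 1 ≤ x) (hx2 : x ≤ M) (hM : 1 ≤ M) :
    rrCycle N (N - x) = 2 * x := by
  unfold rrCycle; rw [if_neg (by omega)]; omega

lemma nodeAt_pos (hN : N = 2 * M) (hM : 2 * n < M) {t j : ℕ}
    (h1 : 1 ≤ t) (h2 : t ≤ n) (hj : 1 ≤ j) :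
    rrNodeAt N t j = rrCycle N (1 + (j - 1 + (N - t)) % (N - 1)) := by
  unfold rrNodeAt
  rw [if_neg (by omega), Nat.mod_eq_of_lt (show t - 1 < N - 1 by omega),
    show (N - 1) - (t - 1) = N - t by omega]

lemma evalA (hN : N = 2 * M) (hM : 2 * n < M) (hn : 2 ≤ n) {t : ℕ}
    (h1 : 1 ≤ t) (h2 : t ≤ n) :
    rrNodeAt N t 0 = 1 ∧ rrNodeAt N t (N - 1 - 0) = 2 * t := by
  refine ⟨by simp [rrNodeAt], ?_⟩
  rw [Nat.sub_zero, nodeAt_pos hN hM h1 h2 (by omega)]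
  rw [Nat.mod_eq_sub_mod (by omega), Nat.mod_eq_of_lt (by omega),
    show 1 + (N - 1 - 1 + (N - t) - (N - 1)) = N - t by omega]
  exact cycle_hi hN (by omega) (by omega) (by omega)

lemma evalB (hN : N = 2 * M) (hM : 2 * n < M) (hn : 2 ≤ n) {t j : ℕ}
    (hj : 1 ≤ j) (hjt : j < t) (h2 : t ≤ n) :
    rrNodeAt N t j = 2 * (t - j) ∧ rrNodeAt N t (N - 1 - j) = 2 * (t + j) := by
  constructor
  · rw [nodeAt_pos hN hM (by omega) h2 hj, Nat.mod_eq_of_lt (by omega),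
      show 1 + (j - 1 + (N - t)) = N - (t - j) by omega]
    exact cycle_hi hN (by omega) (by omega) (by omega)
  · rw [nodeAt_pos hN hM (by omega) h2 (by omega), Nat.mod_eq_sub_mod (by omega),
      Nat.mod_eq_of_lt (by omega),
      show 1 + (N - 1 - j - 1 + (N - t) - (N - 1)) = N - (t + j) by omega]
    exact cycle_hi hN (by omega) (by omega) (by omega)

lemma evalC (hN : N = 2 * M) (hM : 2 * n < M) (hn : 2 ≤ n) {t j : ℕ}
    (h1 : 1 ≤ t) (hjt : t ≤ j) (h2 : t ≤ n) (hj : j ≤ M - 1) (hjtM : j + t ≤ M) :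
    rrNodeAt N t j = 2 * (j - t) + 3 ∧ rrNodeAt N t (N - 1 - j) = 2 * (j + t) := by
  constructor
  · rw [nodeAt_pos hN hM h1 h2 (by omega), Nat.mod_eq_sub_mod (by omega),
      Nat.mod_eq_of_lt (by omega),
      show 1 + (j - 1 + (N - t) - (N - 1)) = j - t + 1 by omega,
      cycle_lo hN (by omega) (by omega)]
    omega
  · rw [nodeAt_pos hN hM h1 h2 (by omega), Nat.mod_eq_sub_mod (by omega),
      Nat.mod_eq_of_lt (by omega),
      show 1 + (N - 1 - j - 1 + (N - t) - (N - 1)) = N - (j + t) by omega]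
    exact cycle_hi hN (by omega) (by omega) (by omega)

lemma evalD (hN : N = 2 * M) (hM : 2 * n < M) (hn : 2 ≤ n) {t j : ℕ}
    (h1 : 1 ≤ t) (hjt : t ≤ j) (h2 : t ≤ n) (hj : j ≤ M - 1) (hjtM : M + 1 ≤ j + t) :
    rrNodeAt N t j = 2 * (j - t) + 3 ∧ rrNodeAt N t (N - 1 - j) = 2 * (N - j - t) + 1 := by
  constructor
  · rw [nodeAt_pos hN hM h1 h2 (by omega), Nat.mod_eq_sub_mod (by omega),
      Nat.mod_eq_of_lt (by omega),
      show 1 + (j - 1 + (N - t) - (N - 1)) = j - t + 1 by omega,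
      cycle_lo hN (by omega) (by omega)]
    omega
  · rw [nodeAt_pos hN hM h1 h2 (by omega), Nat.mod_eq_sub_mod (by omega),
      Nat.mod_eq_of_lt (by omega),
      show 1 + (N - 1 - j - 1 + (N - t) - (N - 1)) = N - j - t by omega]
    exact cycle_lo hN (by omega) (by omega)


lemma rrGraph_adj {n N a b : ℕ} :
    (rrGraph n N).Adj a b ↔ a ≠ b ∧ (rrRel n N a b ∨ rrRel n N b a) :=
  SimpleGraph.fromRel_adj _ a b

lemma rel_mk (hN : N = 2 * M) {t : ℕ} (j : ℕ) (h1 : 1 ≤ t) (h2 : t ≤ n) (hj : j < M) :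
    rrRel n N (rrNodeAt N t j) (rrNodeAt N t (N - 1 - j)) :=
  ⟨t, Finset.mem_Icc.mpr ⟨h1, h2⟩, j, Finset.mem_range.mpr (by omega), rfl, rfl⟩

lemma adj_one (hN : N = 2 * M) (hM : 2 * n < M) (hn : 2 ≤ n) {t : ℕ}
    (h1 : 1 ≤ t) (h2 : t ≤ n) : (rrGraph n N).Adj 1 (2 * t) := by
  have h := rel_mk hN 0 h1 h2 (by omega)
  obtain ⟨e1, e2⟩ := evalA hN hM hn h1 h2
  rw [e1, e2] at h
  exact rrGraph_adj.mpr ⟨by omega, Or.inl h⟩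

lemma adj_ee (hN : N = 2 * M) (hM : 2 * n < M) (hn : 2 ≤ n) {t j : ℕ}
    (hj : 1 ≤ j) (hjt : j < t) (h2 : t ≤ n) :
    (rrGraph n N).Adj (2 * (t - j)) (2 * (t + j)) := by
  have h := rel_mk hN j (by omega) h2 (by omega)
  obtain ⟨e1, e2⟩ := evalB hN hM hn hj hjt h2
  rw [e1, e2] at h
  exact rrGraph_adj.mpr ⟨by omega, Or.inl h⟩

lemma adj_oe (hN : N = 2 * M) (hM : 2 * n < M) (hn : 2 ≤ n) {x d : ℕ}
    (hx : 1 ≤ x) (hd : d % 2 = 1) (hd2 : d ≤ 2 * n - 1) (hxd : x + d ≤ M) :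
    (rrGraph n N).Adj (2 * x + 1) (2 * (x + d)) := by
  set t := (d + 1) / 2 with ht
  have htd : 2 * t - 1 = d ∧ 1 ≤ t ∧ t ≤ n := by omega
  have h := rel_mk hN (x + t - 1) htd.2.1 htd.2.2 (by omega)
  obtain ⟨e1, e2⟩ := evalC hN hM hn htd.2.1 (show t ≤ x + t - 1 by omega) htd.2.2
    (by omega) (by omega)
  rw [e1, e2, show 2 * (x + t - 1 - t) + 3 = 2 * x + 1 by omega,
    show x + t - 1 + t = x + d by omega] at h
  exact rrGraph_adj.mpr ⟨by omega, Or.inl h⟩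

lemma rel_cases (hN : N = 2 * M) (hM : 2 * n < M) (hn : 2 ≤ n) {a b : ℕ}
    (h : rrRel n N a b) :
    (a = 1 ∧ ∃ t, 1 ≤ t ∧ t ≤ n ∧ b = 2 * t) ∨
    (∃ u v, a = 2 * u ∧ b = 2 * v ∧ 1 ≤ u ∧ 1 ≤ v ∧ u + v ≤ 2 * n) ∨
    (∃ x d, a = 2 * x + 1 ∧ b = 2 * (x + d) ∧ 1 ≤ x ∧ 1 ≤ d ∧ d ≤ 2 * n - 1) ∨
    (∃ x y, a = 2 * x + 1 ∧ b = 2 * y + 1 ∧ M + 2 - 2 * n ≤ x ∧ M + 2 - 2 * n ≤ y) := by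
  obtain ⟨t, ht, j, hj, ha, hb⟩ := h
  rw [Finset.mem_Icc] at ht
  rw [Finset.mem_range] at hj
  have hjM : j < M := by omega
  rcases Nat.eq_zero_or_pos j with hj0 | hj0
  · subst hj0
    obtain ⟨e1, e2⟩ := evalA hN hM hn ht.1 ht.2
    exact Or.inl ⟨by rw [ha, e1], t, ht.1, ht.2, by rw [hb, e2]⟩
  · rcases lt_or_ge j t with hjt | hjt
    · obtain ⟨e1, e2⟩ := evalB hN hM hn hj0 hjt ht.2
      exact Or.inr (Or.inl ⟨t - j, t + j, by rw [ha, e1], by rw [hb, e2],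
        by omega, by omega, by omega⟩)
    · rcases le_or_gt (j + t) M with hjtM | hjtM
      · obtain ⟨e1, e2⟩ := evalC hN hM hn ht.1 hjt ht.2 (by omega) hjtM
        refine Or.inr (Or.inr (Or.inl ⟨j - t + 1, 2 * t - 1, ?_, ?_, by omega, by omega, by omega⟩))
        · rw [ha, e1]; omega
        · rw [hb, e2]; congr 1; omega
      · obtain ⟨e1, e2⟩ := evalD hN hM hn ht.1 hjt ht.2 (by omega) (by omega)
        refine Or.inr (Or.inr (Or.inr ⟨j - t + 1, N - j - t, ?_, ?_, by omega, by omega⟩))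
        · rw [ha, e1]; omega
        · rw [hb, e2]


lemma lip (hN : N = 2 * M) (hM : 2 * n < M) (hn : 2 ≤ n) {a b : ℕ}
    (h : rrRel n N a b) :
    min (lv n a) ((M - 1) / (n - 1) + 1) ≤ min (lv n b) ((M - 1) / (n - 1) + 1) + 1 ∧
    min (lv n b) ((M - 1) / (n - 1) + 1) ≤ min (lv n a) ((M - 1) / (n - 1) + 1) + 1 := by
  have h0 : 0 < n - 1 := by omega
  have hK2 : 2 ≤ (M - 1) / (n - 1) :=
    (Nat.le_div_iff_mul_le h0).mpr (by omega)
  rcases rel_cases hN hM hn h with ⟨ha, t, h1, h2, hb⟩ | ⟨u, v, ha, hb, hu, hv, huv⟩ |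
    ⟨x, d, ha, hb, hx, hd1, hd2⟩ | ⟨x, y, ha, hb, hx, hy⟩
  · subst ha; subst hb
    rw [lv_one, lv_even, Nat.div_eq_of_lt (show t - 2 < n - 1 by omega)]
    generalize (M - 1) / (n - 1) = K at *
    omega
  · subst ha; subst hb
    rw [lv_even, lv_even]
    have hu1 : (u - 2) / (n - 1) < 2 := Nat.div_lt_of_lt_mul (by omega)
    have hv1 : (v - 2) / (n - 1) < 2 := Nat.div_lt_of_lt_mul (by omega)
    have hu2 : 1 ≤ (u - 2) / (n - 1) → n - 1 ≤ u - 2 := fun hh => by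
      have := (Nat.le_div_iff_mul_le h0).mp hh; omega
    have hv2 : 1 ≤ (v - 2) / (n - 1) → n - 1 ≤ v - 2 := fun hh => by
      have := (Nat.le_div_iff_mul_le h0).mp hh; omega
    generalize (u - 2) / (n - 1) = du at *
    generalize (v - 2) / (n - 1) = dv at *
    generalize (M - 1) / (n - 1) = K at *
    omega
  · subst ha; subst hb
    rw [lv_odd n x hx, lv_even]
    have h1 : (x - 1) / (n - 1) ≤ (x + d - 2) / (n - 1) :=
      Nat.div_le_div_right (by omega)
    have h2 : (x + d - 2) / (n - 1) ≤ (x - 1) / (n - 1) + 2 := by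
      have := Nat.div_le_div_right (c := n - 1) (show x + d - 2 ≤ (x - 1) + (n - 1) * 2 by omega)
      rwa [Nat.add_mul_div_left _ _ h0] at this
    generalize (x - 1) / (n - 1) = dx at *
    generalize (x + d - 2) / (n - 1) = dy at *
    generalize (M - 1) / (n - 1) = K at *
    omega
  · subst ha; subst hb
    rw [lv_odd n x (by omega), lv_odd n y (by omega)]
    have key : ∀ z : ℕ, M + 2 - 2 * n ≤ z →
        (M - 1) / (n - 1) ≤ (z - 1) / (n - 1) + 2 := by
      intro z hz
      have h1 : (M - 1) - (n - 1) * 2 ≤ z - 1 := by omega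
      have h2 := Nat.div_le_div_right (c := n - 1) h1
      rw [Nat.sub_mul_div _ _ _] at h2
      omega
    have k1 := key x hx
    have k2 := key y hy
    generalize (x - 1) / (n - 1) = dx at *
    generalize (y - 1) / (n - 1) = dy at *
    generalize (M - 1) / (n - 1) = K at *
    omega

lemma walk_bound (hN : N = 2 * M) (hM : 2 * n < M) (hn : 2 ≤ n) {a b : ℕ}
    (p : (rrGraph n N).Walk a b) :
    min (lv n b) ((M - 1) / (n - 1) + 1) ≤ min (lv n a) ((M - 1) / (n - 1) + 1) + p.length := by
  induction p with
  | nil => simp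
  | @cons a c b h p ih =>
    have hrel := (rrGraph_adj.mp h).2
    have hac : min (lv n c) ((M - 1) / (n - 1) + 1) ≤ min (lv n a) ((M - 1) / (n - 1) + 1) + 1 := by
      rcases hrel with h' | h'
      · exact (lip hN hM hn h').2
      · exact (lip hN hM hn h').1
    rw [SimpleGraph.Walk.length_cons]
    omega

lemma dist_lb (hN : N = 2 * M) (hM : 2 * n < M) (hn : 2 ≤ n) {v : ℕ}
    (hr : (rrGraph n N).Reachable 1 v) :
    min (lv n v) ((M - 1) / (n - 1) + 1) ≤ (rrGraph n N).dist 1 v := by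
  obtain ⟨p, hp⟩ := hr.exists_walk_length_eq_dist
  have := walk_bound hN hM hn p
  rw [hp, lv_one] at this
  omega


lemma down (hN : N = 2 * M) (hM : 2 * n < M) (hn : 2 ≤ n) {v : ℕ}
    (h1 : 2 ≤ v) (h2 : v ≤ N) :
    ∃ u, 1 ≤ u ∧ u ≤ N ∧ (rrGraph n N).Adj u v ∧ lv n u + 1 = lv n v := by
  have h0 : 0 < n - 1 := by omega
  rcases Nat.even_or_odd v with ⟨x, hx⟩ | ⟨x, hx⟩
  · -- v = 2 * x
    have hx' : v = 2 * x := by omega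
    subst hx'
    have hx1 : 1 ≤ x := by omega
    by_cases hxn : x ≤ n
    · refine ⟨1, le_refl 1, by omega, adj_one hN hM hn hx1 hxn, ?_⟩
      rw [lv_one, lv_even, Nat.div_eq_of_lt (show x - 2 < n - 1 by omega)]
    · have hD1 : 1 ≤ (x - 2) / (n - 1) :=
        (Nat.le_div_iff_mul_le h0).mpr (by omega)
      by_cases hD : (x - 2) / (n - 1) = 1
      · -- second layer evens
        have hxlt : x - 2 < 2 * (n - 1) := by
          have h := (Nat.div_lt_iff_lt_mul (x := x - 2) (y := 2) h0).mp (by omega)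
          omega
        have hadj := adj_ee hN hM hn (show 1 ≤ x - n by omega)
          (show x - n < n by omega) (le_refl n)
        rw [show n - (x - n) = 2 * n - x by omega, show n + (x - n) = x by omega] at hadj
        refine ⟨2 * (2 * n - x), by omega, by omega, hadj, ?_⟩
        rw [lv_even, lv_even, Nat.div_eq_of_lt (show 2 * n - x - 2 < n - 1 by omega), hD]
      · -- D ≥ 2
        set D := (x - 2) / (n - 1) with hDdef
        set s := (x - 2) % (n - 1) with hsdef
        have hD2 : 2 ≤ D := by omega
        have hs : s < n - 1 := Nat.mod_lt _ h0
        have hxe : (n - 1) * D + s = x - 2 := Nat.div_add_mod _ _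
        set P := (n - 1) * (D - 2) with hPdef
        have hPe : (n - 1) * D = P + (n - 1) * 2 := by
          rw [hPdef, ← Nat.mul_add]; congr 1; omega
        set d := if (n + s) % 2 = 0 then n + s + 1 else n + s + 2 with hddef
        have hdprop : d % 2 = 1 ∧ n + s + 1 ≤ d ∧ d ≤ n + s + 2 ∧ d ≤ 2 * n - 1 := by
          rw [hddef]; split <;> omega
        have hxP : x - 2 = P + (n - 1) * 2 + s := by omega
        have hdx : d ≤ x - 1 := by omega
        have hQ1 : (D - 2) * (n - 1) = P := by rw [hPdef, mul_comm]
        have hQ2 : (D - 2 + 1) * (n - 1) = P + (n - 1) := by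
          rw [Nat.add_mul, one_mul, hQ1]
        have hwdiv : (x - d - 1) / (n - 1) = D - 2 := by
          apply Nat.div_eq_of_lt_le
          · rw [hQ1]; omega
          · rw [hQ2]; omega
        have hadj := adj_oe hN hM hn (show 1 ≤ x - d by omega) hdprop.1 hdprop.2.2.2
          (show x - d + d ≤ M by omega)
        rw [show x - d + d = x by omega] at hadj
        refine ⟨2 * (x - d) + 1, by omega, by omega, hadj, ?_⟩
        rw [lv_odd n (x - d) (by omega), lv_even, hwdiv]
        omega
  · -- v = 2 * x + 1
    have hx' : v = 2 * x + 1 := by omega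
    subst hx'
    have hx1 : 1 ≤ x := by omega
    have hadj := adj_oe hN hM hn hx1 (show 1 % 2 = 1 from rfl) (by omega)
      (show x + 1 ≤ M by omega)
    refine ⟨2 * (x + 1), by omega, by omega, hadj.symm, ?_⟩
    rw [lv_odd n x hx1, lv_even, show x + 1 - 2 = x - 1 by omega]

lemma exists_walk (hN : N = 2 * M) (hM : 2 * n < M) (hn : 2 ≤ n) :
    ∀ k v, 1 ≤ v → v ≤ N → lv n v = k →
      ∃ p : (rrGraph n N).Walk 1 v, p.length = k := by
  intro k
  induction k using Nat.strong_induction_on with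
  | _ k ih =>
    intro v hv1 hv2 hlv
    by_cases hv : v = 1
    · subst hv
      exact ⟨SimpleGraph.Walk.nil, by rw [← hlv, lv_one]; rfl⟩
    · obtain ⟨u, hu1, hu2, hadj, hlvu⟩ := down hN hM hn (by omega) hv2
      obtain ⟨p, hp⟩ := ih (lv n u) (by omega) u hu1 hu2 rfl
      exact ⟨p.concat hadj, by rw [SimpleGraph.Walk.length_concat, hp]; omega⟩

lemma dist_eq (hN : N = 2 * M) (hM : 2 * n < M) (hn : 2 ≤ n) {v : ℕ}
    (h1 : 1 ≤ v) (h2 : v ≤ N) (hle : lv n v ≤ (M - 1) / (n - 1)) :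
    (rrGraph n N).dist 1 v = lv n v := by
  obtain ⟨p, hp⟩ := exists_walk hN hM hn (lv n v) v h1 h2 rfl
  have hub := SimpleGraph.dist_le p
  have hlb := dist_lb hN hM hn (⟨p⟩ : (rrGraph n N).Reachable 1 v)
  omega

lemma dist_gt (hN : N = 2 * M) (hM : 2 * n < M) (hn : 2 ≤ n) {v : ℕ}
    (h1 : 1 ≤ v) (h2 : v ≤ N) (hgt : (M - 1) / (n - 1) < lv n v) :
    (M - 1) / (n - 1) < (rrGraph n N).dist 1 v := by
  obtain ⟨p, hp⟩ := exists_walk hN hM hn (lv n v) v h1 h2 rfl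
  have hlb := dist_lb hN hM hn (⟨p⟩ : (rrGraph n N).Reachable 1 v)
  omega


lemma filter_dist_eq (hN : N = 2 * M) (hM : 2 * n < M) (hn : 2 ≤ n) (q : ℕ)
    (hq : q ≤ (M - 1) / (n - 1)) :
    (Finset.Icc 1 N).filter (fun i => (rrGraph n N).dist 1 i = q) =
      (Finset.Icc 1 N).filter (fun i => lv n i = q) := by
  ext v
  simp only [Finset.mem_filter, Finset.mem_Icc]
  constructor
  · rintro ⟨⟨h1, h2⟩, hd⟩
    refine ⟨⟨h1, h2⟩, ?_⟩
    by_cases hc : lv n v ≤ (M - 1) / (n - 1)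
    · rw [dist_eq hN hM hn h1 h2 hc] at hd; exact hd
    · exfalso; have := dist_gt hN hM hn h1 h2 (by omega); omega
  · rintro ⟨⟨h1, h2⟩, hd⟩
    exact ⟨⟨h1, h2⟩, by rw [dist_eq hN hM hn h1 h2 (by omega), hd]⟩

lemma set0 (hN : N = 2 * M) (hM : 2 * n < M) (hn : 2 ≤ n) :
    (Finset.Icc 1 N).filter (fun i => lv n i = 0) = {1} := by
  ext v
  simp only [Finset.mem_filter, Finset.mem_Icc, Finset.mem_singleton]
  constructor
  · rintro ⟨⟨h1, h2⟩, h3⟩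
    by_contra hne
    rcases Nat.even_or_odd v with ⟨x, hx⟩ | ⟨x, hx⟩
    · have hv : v = 2 * x := by omega
      subst hv
      rw [lv_even] at h3
      generalize (x - 2) / (n - 1) = D at h3
      omega
    · have hv : v = 2 * x + 1 := by omega
      subst hv
      rw [lv_odd n x (by omega)] at h3
      generalize (x - 1) / (n - 1) = D at h3
      omega
  · rintro rfl
    exact ⟨⟨le_refl 1, by omega⟩, lv_one n⟩

lemma set1 (hN : N = 2 * M) (hM : 2 * n < M) (hn : 2 ≤ n) :
    (Finset.Icc 1 N).filter (fun i => lv n i = 1) =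
      (Finset.Icc 1 n).image (fun x => 2 * x) := by
  have h0 : 0 < n - 1 := by omega
  ext v
  simp only [Finset.mem_filter, Finset.mem_Icc, Finset.mem_image]
  constructor
  · rintro ⟨⟨h1, h2⟩, h3⟩
    rcases Nat.even_or_odd v with ⟨x, hx⟩ | ⟨x, hx⟩
    · have hv : v = 2 * x := by omega
      subst hv
      rw [lv_even] at h3
      have himp : n - 1 ≤ x - 2 → 1 ≤ (x - 2) / (n - 1) := fun hh =>
        (Nat.le_div_iff_mul_le h0).mpr (by omega)
      generalize (x - 2) / (n - 1) = D at h3 himp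
      exact ⟨x, ⟨by omega, by omega⟩, rfl⟩
    · have hv : v = 2 * x + 1 := by omega
      subst hv
      rcases Nat.eq_zero_or_pos x with rfl | hx1
      · rw [show 2 * 0 + 1 = 1 by omega, lv_one] at h3; omega
      · rw [lv_odd n x hx1] at h3
        generalize (x - 1) / (n - 1) = D at h3
        omega
  · rintro ⟨x, ⟨hx1, hx2⟩, rfl⟩
    refine ⟨⟨by omega, by omega⟩, ?_⟩
    have hdiv : (x - 2) / (n - 1) = 0 := Nat.div_eq_of_lt (show x - 2 < n - 1 by omega)
    rw [lv_even, hdiv]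

lemma setq (hN : N = 2 * M) (hM : 2 * n < M) (hn : 2 ≤ n) (q : ℕ)
    (hq2 : 2 ≤ q) (hqK : q ≤ (M - 1) / (n - 1)) :
    (Finset.Icc 1 N).filter (fun i => lv n i = q) =
      (Finset.Icc ((q - 2) * (n - 1) + 1) ((q - 1) * (n - 1))).image (fun x => 2 * x + 1) ∪
      (Finset.Icc (2 + (q - 1) * (n - 1)) (1 + q * (n - 1))).image (fun x => 2 * x) := by
  have h0 : 0 < n - 1 := by omega
  have e1 : q - 2 + 1 = q - 1 := by omega
  have e2 : q - 1 + 1 = q := by omega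
  have hrel1 : (q - 1) * (n - 1) = (q - 2) * (n - 1) + (n - 1) := by
    calc (q - 1) * (n - 1) = (q - 2 + 1) * (n - 1) := by rw [e1]
    _ = (q - 2) * (n - 1) + (n - 1) := by rw [Nat.add_mul, one_mul]
  have hrel2 : q * (n - 1) = (q - 1) * (n - 1) + (n - 1) := by
    calc q * (n - 1) = (q - 1 + 1) * (n - 1) := by rw [e2]
    _ = (q - 1) * (n - 1) + (n - 1) := by rw [Nat.add_mul, one_mul]
  have hKM : q * (n - 1) ≤ M - 1 :=
    le_trans (Nat.mul_le_mul_right _ hqK) (Nat.div_mul_le_self _ _)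
  ext v
  simp only [Finset.mem_filter, Finset.mem_Icc, Finset.mem_union, Finset.mem_image]
  constructor
  · rintro ⟨⟨h1, h2⟩, h3⟩
    rcases Nat.even_or_odd v with ⟨x, hx⟩ | ⟨x, hx⟩
    · right
      have hv : v = 2 * x := by omega
      subst hv
      rw [lv_even] at h3
      have hd : (x - 2) / (n - 1) = q - 1 := by
        generalize (x - 2) / (n - 1) = D at h3 ⊢
        omega
      have hlo : (q - 1) * (n - 1) ≤ x - 2 :=
        (Nat.le_div_iff_mul_le h0).mp (le_of_eq hd.symm)
      have hhi : x - 2 < q * (n - 1) :=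
        (Nat.div_lt_iff_lt_mul h0).mp (by rw [hd]; omega)
      clear h3 hd
      exact ⟨x, ⟨by omega, by omega⟩, rfl⟩
    · left
      have hv : v = 2 * x + 1 := by omega
      subst hv
      have hx1 : 1 ≤ x := by
        rcases Nat.eq_zero_or_pos x with rfl | hx1
        · rw [show 2 * 0 + 1 = 1 by omega, lv_one] at h3; omega
        · exact hx1
      rw [lv_odd n x hx1] at h3
      have hd : (x - 1) / (n - 1) = q - 2 := by
        generalize (x - 1) / (n - 1) = D at h3 ⊢
        omega
      have hlo : (q - 2) * (n - 1) ≤ x - 1 :=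
        (Nat.le_div_iff_mul_le h0).mp (le_of_eq hd.symm)
      have hhi : x - 1 < (q - 1) * (n - 1) :=
        (Nat.div_lt_iff_lt_mul (x := x - 1) (y := q - 1) h0).mp (by rw [hd]; omega)
      clear h3 hd
      exact ⟨x, ⟨by omega, by omega⟩, rfl⟩
  · rintro (⟨x, ⟨hx1, hx2⟩, rfl⟩ | ⟨x, ⟨hx1, hx2⟩, rfl⟩)
    · have hx0 : 1 ≤ x := by omega
      refine ⟨⟨by omega, by omega⟩, ?_⟩
      have hdiv : (x - 1) / (n - 1) = q - 2 := by
        apply Nat.div_eq_of_lt_le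
        · omega
        · rw [e1]; omega
      rw [lv_odd n x hx0, hdiv]
      omega
    · refine ⟨⟨by omega, by omega⟩, ?_⟩
      have hdiv : (x - 2) / (n - 1) = q - 1 := by
        apply Nat.div_eq_of_lt_le
        · omega
        · rw [e2]; omega
      rw [lv_even, hdiv]
      omega

end Main

end RRaux

theorem rr_distance_layers (n N : ℕ) (hN : Even N) (hn : 2 ≤ n) (hnN : 4 * n < N) :
    letI Q := (N / 2 - 1) / (n - 1)
    letI Vq := fun q : ℕ => (Finset.Icc 1 N).filter fun i => (rrGraph n N).dist 1 i = q
    (Vq 0).card = 1 ∧ (Vq 1).card = n ∧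
      Vq 1 = (Finset.Icc 1 n).image (fun x => 2 * x) ∧
      ∀ q, 2 ≤ q → q ≤ Q →
        (Vq q).card = 2 * (n - 1) ∧
        Vq q = (Finset.Icc ((q - 2) * (n - 1) + 1) ((q - 1) * (n - 1))).image
                 (fun x => 2 * x + 1) ∪
               (Finset.Icc (2 + (q - 1) * (n - 1)) (1 + q * (n - 1))).image
                 (fun x => 2 * x) := by
  obtain ⟨m, hm⟩ := hN
  have hN2 : N = 2 * (N / 2) := by omega
  have hMn : 2 * n < N / 2 := by omega
  have h0 : 0 < n - 1 := by omega
  have hK2 : 2 ≤ (N / 2 - 1) / (n - 1) :=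
    (Nat.le_div_iff_mul_le h0).mpr (by omega)
  have hinj2 : Function.Injective (fun x : ℕ => 2 * x) := fun a b h => by
    simp only at h; omega
  have hinj21 : Function.Injective (fun x : ℕ => 2 * x + 1) := fun a b h => by
    simp only at h; omega
  refine ⟨?_, ?_, ?_, ?_⟩
  · beta_reduce
    rw [RRaux.filter_dist_eq hN2 hMn hn 0 (by omega), RRaux.set0 hN2 hMn hn]
    rfl
  · beta_reduce
    rw [RRaux.filter_dist_eq hN2 hMn hn 1 (by omega), RRaux.set1 hN2 hMn hn,
      Finset.card_image_of_injective _ hinj2, Nat.card_Icc]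
    omega
  · beta_reduce
    rw [RRaux.filter_dist_eq hN2 hMn hn 1 (by omega), RRaux.set1 hN2 hMn hn]
  · intro q hq2 hqQ
    beta_reduce
    have hseteq := RRaux.setq hN2 hMn hn q hq2 hqQ
    rw [RRaux.filter_dist_eq hN2 hMn hn q hqQ, hseteq]
    refine ⟨?_, rfl⟩
    have hdisj : Disjoint
        ((Finset.Icc ((q - 2) * (n - 1) + 1) ((q - 1) * (n - 1))).image (fun x => 2 * x + 1))
        ((Finset.Icc (2 + (q - 1) * (n - 1)) (1 + q * (n - 1))).image (fun x => 2 * x)) := by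
      rw [Finset.disjoint_left]
      intro a ha hb
      simp only [Finset.mem_image, Finset.mem_Icc] at ha hb
      obtain ⟨x, _, hx⟩ := ha
      obtain ⟨y, _, hy⟩ := hb
      omega
    rw [Finset.card_union_of_disjoint hdisj,
      Finset.card_image_of_injective _ hinj21, Finset.card_image_of_injective _ hinj2,
      Nat.card_Icc, Nat.card_Icc]
    have e1 : q - 2 + 1 = q - 1 := by omega
    have e2 : q - 1 + 1 = q := by omega
    have hrel1 : (q - 1) * (n - 1) = (q - 2) * (n - 1) + (n - 1) := by
      calc (q - 1) * (n - 1) = (q - 2 + 1) * (n - 1) := by rw [e1]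
      _ = (q - 2) * (n - 1) + (n - 1) := by rw [Nat.add_mul, one_mul]
    have hrel2 : q * (n - 1) = (q - 1) * (n - 1) + (n - 1) := by
      calc q * (n - 1) = (q - 1 + 1) * (n - 1) := by rw [e2]
      _ = (q - 1) * (n - 1) + (n - 1) := by rw [Nat.add_mul, one_mul]
    omega
end
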